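/- Let (π_0, …, π_{c−1}) be a price cycle and g : P × P → ℝ any gain function. Suppose t' is an integer with 1 ≤ t' < c such that both t'−1 and c−1 are reset points of the cycle and π_{t'−1} = π_{c−1}. Then the objective value of (π_0, …, π_{c−1}) is at most the maximum of the objective value of the price cycle (π_0, …, π_{t'−1}) (of length t') and the objective value of the price cycle (π_{t'}, …, π_{c−1}) (of length c−t'). -/

import Mathlib

/-- Entry of a price cycle at (cyclic) position `t`. -/
noncomputable def cycEntry (L : List ℝ) (t : ℕ) : ℝ := L.getD (t % L.length) 0

/-- Reference at position `t`: minimum of the `ℓ` cyclically preceding entries. -/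
noncomputable def cycRef (ℓ : ℕ) (hℓ : 0 < ℓ) (L : List ℝ) (t : ℕ) : ℝ :=
  (Finset.range ℓ).inf' (Finset.nonempty_range_iff.mpr hℓ.ne') fun j =>
    cycEntry L (t + L.length * ℓ - (j + 1))

/-- Objective value of a price cycle. -/
noncomputable def cycObj (g : ℝ → ℝ → ℝ) (ℓ : ℕ) (hℓ : 0 < ℓ) (L : List ℝ) : ℝ :=
  (∑ t ∈ Finset.range L.length, g (cycRef ℓ hℓ L t) (cycEntry L t)) / L.length

def RefMonotone (P : Finset ℝ) (g : ℝ → ℝ → ℝ) : Prop :=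
  ∀ p ∈ P, ∀ r ∈ P, ∀ r' ∈ P, r ≤ r' → g r p ≤ g r' p

noncomputable def genK (ℓ : ℕ) (R : List ℝ) (t : ℕ) : ℕ :=
  if R.getD ((t + R.length - 1) % R.length) 0 < R.getD t 0 then ℓ else 1

noncomputable def inducedCycle (ℓ : ℕ) (R : List ℝ) : List ℝ :=
  (List.range R.length).flatMap fun t => List.replicate (genK ℓ R t) (R.getD t 0)

def IsResetPoint (ℓ : ℕ) (hℓ : 0 < ℓ) (L : List ℝ) (t : ℕ) : Prop :=
  cycEntry L t = (Finset.range ℓ).inf' (Finset.nonempty_range_iff.mpr hℓ.ne') fun j =>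
    cycEntry L (t + L.length * ℓ - j)

/- ### Auxiliary lemmas -/

lemma cycEntry_def (L : List ℝ) (n : ℕ) : cycEntry L n = L.getD (n % L.length) 0 := rfl

lemma cycEntry_add_mul (L : List ℝ) (n k : ℕ) :
    cycEntry L (n + L.length * k) = cycEntry L n := by
  rw [cycEntry_def, cycEntry_def, Nat.add_mul_mod_self_left]

lemma cycEntry_eq_getD (L : List ℝ) (n : ℕ) (h : n < L.length) :
    cycEntry L n = L.getD n 0 := by
  rw [cycEntry_def, Nat.mod_eq_of_lt h]

lemma modM {m ℓ i : ℕ} (hm : 0 < m) (hi : i < ℓ) :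
    (m * ℓ - (i + 1)) % m = m - 1 - i % m := by
  have h1 : m * (i / m) + i % m = i := Nat.div_add_mod i m
  have hu : i % m < m := Nat.mod_lt _ hm
  have hq : i / m < ℓ := lt_of_le_of_lt (Nat.div_le_self i m) hi
  have e1 : ℓ = (ℓ - 1 - i / m) + (i / m) + 1 := by omega
  have e2 : m * ℓ = m * (ℓ - 1 - i / m) + m * (i / m) + m := by
    conv_lhs => rw [e1]
    ring
  have e3 : m * ℓ - (i + 1) = m * (ℓ - 1 - i / m) + (m - 1 - i % m) := by omega
  rw [e3, Nat.mul_add_mod, Nat.mod_eq_of_lt (by omega)]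

lemma reset_le {ℓ : ℕ} (hℓ : 0 < ℓ) {L : List ℝ} {r : ℕ} (h : IsResetPoint ℓ hℓ L r)
    {j : ℕ} (hj : j < ℓ) : cycEntry L r ≤ cycEntry L (r + L.length * ℓ - j) := by
  unfold IsResetPoint at h
  rw [h]
  exact Finset.inf'_le _ (Finset.mem_range.mpr hj)

lemma cycEntry_take (L : List ℝ) (t' : ℕ) (h1 : 0 < t') (h2 : t' ≤ L.length) (n : ℕ) :
    cycEntry (L.take t') n = L.getD (n % t') 0 := by
  have hlen : (L.take t').length = t' := by rw [List.length_take]; omega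
  have hmod : n % t' < t' := Nat.mod_lt _ h1
  rw [cycEntry_def, hlen, List.getD_eq_getElem?_getD, List.getD_eq_getElem?_getD,
      List.getElem?_take_of_lt hmod]

lemma cycEntry_drop (L : List ℝ) (t' : ℕ) (n : ℕ) :
    cycEntry (L.drop t') n = L.getD (t' + n % (L.length - t')) 0 := by
  rw [cycEntry_def, List.length_drop, List.getD_eq_getElem?_getD, List.getD_eq_getElem?_getD,
      List.getElem?_drop]

/-- if `t'−1` and `c−1` are reset points carrying the same price,
then the objective value of the whole cycle is at most the max of the objective
values of the two sub-cycles obtained by splitting at these reset points. -/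
theorem stmt2 (P : Finset ℝ) (hP : P.Nonempty) (ℓ : ℕ) (hℓ : 0 < ℓ)
    (g : ℝ → ℝ → ℝ)
    (L : List ℝ) (hLP : ∀ x ∈ L, x ∈ P)
    (t' : ℕ) (ht'1 : 1 ≤ t') (ht'c : t' < L.length)
    (hreset1 : IsResetPoint ℓ hℓ L (t' - 1))
    (hreset2 : IsResetPoint ℓ hℓ L (L.length - 1))
    (heq : cycEntry L (t' - 1) = cycEntry L (L.length - 1)) :
    cycObj g ℓ hℓ L ≤ max (cycObj g ℓ hℓ (L.take t')) (cycObj g ℓ hℓ (L.drop t')) := by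
  have ht'le : t' ≤ L.length := ht'c.le
  have hc : 0 < L.length := lt_of_le_of_lt (Nat.zero_le _) ht'c
  have hℓc : ℓ ≤ L.length * ℓ := Nat.le_mul_of_pos_left ℓ hc
  have hℓt' : ℓ ≤ t' * ℓ := Nat.le_mul_of_pos_left ℓ ht'1
  have hℓc'' : ℓ ≤ (L.length - t') * ℓ := Nat.le_mul_of_pos_left ℓ (by omega)
  have hlen_take : (L.take t').length = t' := by rw [List.length_take]; omega
  have hlen_drop : (L.drop t').length = L.length - t' := List.length_drop
  have heq' : L.getD (t' - 1) 0 = L.getD (L.length - 1) 0 := by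
    rw [← cycEntry_eq_getD L (t' - 1) (by omega), ← cycEntry_eq_getD L (L.length - 1) (by omega),
      heq]
  have key1 : ∀ i, i < ℓ → i ≤ t' - 1 → L.getD (t' - 1) 0 ≤ L.getD (t' - 1 - i) 0 := by
    intro i hiℓ hir
    have h := reset_le hℓ hreset1 hiℓ
    rw [show t' - 1 + L.length * ℓ - i = (t' - 1 - i) + L.length * ℓ from by omega,
        cycEntry_add_mul, cycEntry_eq_getD L (t' - 1 - i) (by omega),
        cycEntry_eq_getD L (t' - 1) (by omega)] at h
    exact h
  have key2 : ∀ i, i < ℓ → i ≤ L.length - 1 →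
      L.getD (L.length - 1) 0 ≤ L.getD (L.length - 1 - i) 0 := by
    intro i hiℓ hir
    have h := reset_le hℓ hreset2 hiℓ
    rw [show L.length - 1 + L.length * ℓ - i = (L.length - 1 - i) + L.length * ℓ from by omega,
        cycEntry_add_mul, cycEntry_eq_getD L (L.length - 1 - i) (by omega),
        cycEntry_eq_getD L (L.length - 1) (by omega)] at h
    exact h
  -- references agree on the first segment
  have ref_take : ∀ t, t < t' → cycRef ℓ hℓ (L.take t') t = cycRef ℓ hℓ L t := by
    intro t ht
    unfold cycRef
    rw [hlen_take]
    have hAval : ∀ j, t ≤ j → j < ℓ →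
        cycEntry (L.take t') (t + t' * ℓ - (j + 1)) = L.getD (t' - 1 - (j - t) % t') 0 := by
      intro j h1 h2
      rw [cycEntry_take L t' (by omega) ht'le,
          show t + t' * ℓ - (j + 1) = t' * ℓ - ((j - t) + 1) from by omega,
          modM (by omega) (show j - t < ℓ by omega)]
    have hAval' : ∀ j, j < t →
        cycEntry (L.take t') (t + t' * ℓ - (j + 1)) = L.getD (t - 1 - j) 0 := by
      intro j h1
      rw [cycEntry_take L t' (by omega) ht'le,
          show t + t' * ℓ - (j + 1) = (t - 1 - j) + t' * ℓ from by omega,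
          Nat.add_mul_mod_self_left, Nat.mod_eq_of_lt (by omega)]
    have hBval : ∀ j, j < t →
        cycEntry L (t + L.length * ℓ - (j + 1)) = L.getD (t - 1 - j) 0 := by
      intro j h1
      rw [show t + L.length * ℓ - (j + 1) = (t - 1 - j) + L.length * ℓ from by omega,
          cycEntry_add_mul, cycEntry_eq_getD L (t - 1 - j) (by omega)]
    have hBlow : ∀ j, t ≤ j → j < ℓ →
        L.getD (L.length - 1) 0 ≤ cycEntry L (t + L.length * ℓ - (j + 1)) := by
      intro j h1 h2
      have h := reset_le hℓ hreset2 (show j - t < ℓ by omega)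
      rw [show L.length - 1 + L.length * ℓ - (j - t)
            = (t + L.length * ℓ - (j + 1)) + L.length * 1 from by omega,
          cycEntry_add_mul, cycEntry_eq_getD L (L.length - 1) (by omega)] at h
      exact h
    have hAlow : ∀ j, t ≤ j → j < ℓ →
        L.getD (t' - 1) 0 ≤ cycEntry (L.take t') (t + t' * ℓ - (j + 1)) := by
      intro j h1 h2
      rw [hAval j h1 h2]
      exact key1 ((j - t) % t') (by have := Nat.mod_le (j - t) t'; omega)
        (by have := Nat.mod_lt (j - t) (show 0 < t' by omega); omega)
    have hBt : ∀ j, t ≤ j → j < ℓ →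
        cycEntry L (t + L.length * ℓ - (t + 1)) = L.getD (L.length - 1) 0 := by
      intro j h1 h2
      rw [cycEntry_def,
          show t + L.length * ℓ - (t + 1) = L.length * ℓ - (0 + 1) from by omega,
          modM hc hℓ]
      simp
    have hAt : ∀ j, t ≤ j → j < ℓ →
        cycEntry (L.take t') (t + t' * ℓ - (t + 1)) = L.getD (t' - 1) 0 := by
      intro j h1 h2
      rw [hAval t le_rfl (by omega)]
      simp
    apply le_antisymm
    · apply Finset.le_inf'
      intro j hj
      rw [Finset.mem_range] at hj
      rcases lt_or_ge j t with hjt | hjt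
      · exact le_of_le_of_eq (Finset.inf'_le _ (Finset.mem_range.mpr hj))
          ((hAval' j hjt).trans (hBval j hjt).symm)
      · refine le_trans (Finset.inf'_le _ (Finset.mem_range.mpr (show t < ℓ by omega))) ?_
        rw [hAt j hjt hj, heq']
        exact hBlow j hjt hj
    · apply Finset.le_inf'
      intro j hj
      rw [Finset.mem_range] at hj
      rcases lt_or_ge j t with hjt | hjt
      · exact le_of_le_of_eq (Finset.inf'_le _ (Finset.mem_range.mpr hj))
          ((hBval j hjt).trans (hAval' j hjt).symm)
      · refine le_trans (Finset.inf'_le _ (Finset.mem_range.mpr (show t < ℓ by omega))) ?_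
        rw [hBt j hjt hj, ← heq']
        exact hAlow j hjt hj
  -- references agree on the second segment
  have ref_drop : ∀ s, s < L.length - t' →
      cycRef ℓ hℓ (L.drop t') s = cycRef ℓ hℓ L (t' + s) := by
    intro s hs
    unfold cycRef
    rw [hlen_drop]
    have hAval : ∀ j, s ≤ j → j < ℓ →
        cycEntry (L.drop t') (s + (L.length - t') * ℓ - (j + 1))
          = L.getD (L.length - 1 - (j - s) % (L.length - t')) 0 := by
      intro j h1 h2
      rw [cycEntry_drop L t',
          show s + (L.length - t') * ℓ - (j + 1) = (L.length - t') * ℓ - ((j - s) + 1) from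
            by omega,
          modM (by omega) (show j - s < ℓ by omega),
          show t' + (L.length - t' - 1 - (j - s) % (L.length - t'))
             = L.length - 1 - (j - s) % (L.length - t') from by
            have := Nat.mod_lt (j - s) (show 0 < L.length - t' by omega); omega]
    have hAval' : ∀ j, j < s →
        cycEntry (L.drop t') (s + (L.length - t') * ℓ - (j + 1))
          = L.getD (t' + (s - 1 - j)) 0 := by
      intro j h1
      rw [cycEntry_drop L t',
          show s + (L.length - t') * ℓ - (j + 1) = (s - 1 - j) + (L.length - t') * ℓ from
            by omega,
          Nat.add_mul_mod_self_left, Nat.mod_eq_of_lt (by omega)]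
    have hBval : ∀ j, j < s →
        cycEntry L (t' + s + L.length * ℓ - (j + 1)) = L.getD (t' + (s - 1 - j)) 0 := by
      intro j h1
      rw [show t' + s + L.length * ℓ - (j + 1) = (t' + (s - 1 - j)) + L.length * ℓ from by omega,
          cycEntry_add_mul, cycEntry_eq_getD L (t' + (s - 1 - j)) (by omega)]
    have hBlow : ∀ j, s ≤ j → j < ℓ →
        L.getD (t' - 1) 0 ≤ cycEntry L (t' + s + L.length * ℓ - (j + 1)) := by
      intro j h1 h2
      have h := reset_le hℓ hreset1 (show j - s < ℓ by omega)
      rw [show t' - 1 + L.length * ℓ - (j - s) = t' + s + L.length * ℓ - (j + 1) from by omega,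
          cycEntry_eq_getD L (t' - 1) (by omega)] at h
      exact h
    have hAlow : ∀ j, s ≤ j → j < ℓ →
        L.getD (L.length - 1) 0 ≤ cycEntry (L.drop t') (s + (L.length - t') * ℓ - (j + 1)) := by
      intro j h1 h2
      rw [hAval j h1 h2]
      exact key2 ((j - s) % (L.length - t'))
        (by have := Nat.mod_le (j - s) (L.length - t'); omega)
        (by have := Nat.mod_lt (j - s) (show 0 < L.length - t' by omega); omega)
    have hBs : cycEntry L (t' + s + L.length * ℓ - (s + 1)) = L.getD (t' - 1) 0 := by
      rw [show t' + s + L.length * ℓ - (s + 1) = (t' - 1) + L.length * ℓ from by omega,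
          cycEntry_add_mul, cycEntry_eq_getD L (t' - 1) (by omega)]
    have hAs : ∀ j, s ≤ j → j < ℓ →
        cycEntry (L.drop t') (s + (L.length - t') * ℓ - (s + 1)) = L.getD (L.length - 1) 0 := by
      intro j h1 h2
      rw [hAval s le_rfl (by omega)]
      simp
    apply le_antisymm
    · apply Finset.le_inf'
      intro j hj
      rw [Finset.mem_range] at hj
      rcases lt_or_ge j s with hjs | hjs
      · exact le_of_le_of_eq (Finset.inf'_le _ (Finset.mem_range.mpr hj))
          ((hAval' j hjs).trans (hBval j hjs).symm)
      · refine le_trans (Finset.inf'_le _ (Finset.mem_range.mpr (show s < ℓ by omega))) ?_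
        rw [hAs j hjs hj, ← heq']
        exact hBlow j hjs hj
    · apply Finset.le_inf'
      intro j hj
      rw [Finset.mem_range] at hj
      rcases lt_or_ge j s with hjs | hjs
      · exact le_of_le_of_eq (Finset.inf'_le _ (Finset.mem_range.mpr hj))
          ((hBval j hjs).trans (hAval' j hjs).symm)
      · refine le_trans (Finset.inf'_le _ (Finset.mem_range.mpr (show s < ℓ by omega))) ?_
        rw [hBs, heq']
        exact hAlow j hjs hj
  -- entries agree
  have ent_take : ∀ t, t < t' → cycEntry (L.take t') t = cycEntry L t := by
    intro t ht
    rw [cycEntry_take L t' (by omega) ht'le, Nat.mod_eq_of_lt ht,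
        cycEntry_eq_getD L t (by omega)]
  have ent_drop : ∀ s, s < L.length - t' → cycEntry (L.drop t') s = cycEntry L (t' + s) := by
    intro s hs
    rw [cycEntry_drop L t', Nat.mod_eq_of_lt hs, cycEntry_eq_getD L (t' + s) (by omega)]
  -- objective values
  have hobj_take : cycObj g ℓ hℓ (L.take t')
      = (∑ t ∈ Finset.range t', g (cycRef ℓ hℓ L t) (cycEntry L t)) / (t' : ℝ) := by
    unfold cycObj
    rw [hlen_take]
    congr 1
    apply Finset.sum_congr rfl
    intro t ht
    rw [Finset.mem_range] at ht
    rw [ref_take t ht, ent_take t ht]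
  have hobj_drop : cycObj g ℓ hℓ (L.drop t')
      = (∑ s ∈ Finset.range (L.length - t'),
          g (cycRef ℓ hℓ L (t' + s)) (cycEntry L (t' + s))) / ((L.length - t' : ℕ) : ℝ) := by
    unfold cycObj
    rw [hlen_drop]
    congr 1
    apply Finset.sum_congr rfl
    intro s hs
    rw [Finset.mem_range] at hs
    rw [ref_drop s hs, ent_drop s hs]
  have hsplit : ∑ t ∈ Finset.range L.length, g (cycRef ℓ hℓ L t) (cycEntry L t)
      = (∑ t ∈ Finset.range t', g (cycRef ℓ hℓ L t) (cycEntry L t))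
        + ∑ s ∈ Finset.range (L.length - t'),
            g (cycRef ℓ hℓ L (t' + s)) (cycEntry L (t' + s)) := by
    rw [← Finset.sum_range_add_sum_Ico _ ht'le, Finset.sum_Ico_eq_sum_range]
  rw [hobj_take, hobj_drop]
  unfold cycObj
  rw [hsplit]
  set S1 := ∑ t ∈ Finset.range t', g (cycRef ℓ hℓ L t) (cycEntry L t) with hS1
  set S2 := ∑ s ∈ Finset.range (L.length - t'),
      g (cycRef ℓ hℓ L (t' + s)) (cycEntry L (t' + s)) with hS2
  set M := max (S1 / (t' : ℝ)) (S2 / ((L.length - t' : ℕ) : ℝ)) with hM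
  have ht'pos : (0 : ℝ) < (t' : ℝ) := by positivity
  have hc''pos : (0 : ℝ) < ((L.length - t' : ℕ) : ℝ) := by
    have : 0 < L.length - t' := by omega
    positivity
  have hcpos : (0 : ℝ) < (L.length : ℝ) := by positivity
  have e1 : S1 ≤ M * (t' : ℝ) := (div_le_iff₀ ht'pos).mp (le_max_left _ _)
  have e2 : S2 ≤ M * ((L.length - t' : ℕ) : ℝ) := (div_le_iff₀ hc''pos).mp (le_max_right _ _)
  have hcast : ((L.length - t' : ℕ) : ℝ) = (L.length : ℝ) - (t' : ℝ) := by
    push_cast [ht'le]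
    ring
  rw [div_le_iff₀ hcpos]
  calc S1 + S2 ≤ M * (t' : ℝ) + M * ((L.length - t' : ℕ) : ℝ) := add_le_add e1 e2
    _ = M * (L.length : ℝ) := by rw [hcast]; ring
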